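/- Let (xⁿ)_{n≥0} satisfy 3x^{n+1} - 4xⁿ + x^{n-1} ≤ -(b^{n+1} + d^{n+1} - dⁿ) for n ≥ 2, where bⁿ, dⁿ ≥ 0. Then there exists a constant c > 0 depending only on x¹, x², d² such that for all N ≥ 3: x^N + (1/3)Σ_{k=3}^{N} b^k + (1/3)d^N ≤ c(x¹ + x² + d²). -/
import Mathlib


open Finset

/-- Application of the three-term recursion lemma: uniform bound on discrete energy
plus cumulative dissipation for the BDF2 artificial-compressibility scheme. -/
theorem three_term_recursion_energy_bound (x b d : ℕ → ℝ)
    (hx : ∀ n, 0 ≤ x n) (hb : ∀ n, 0 ≤ b n) (hd : ∀ n, 0 ≤ d n)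
    (h : ∀ n : ℕ, 2 ≤ n →
      3 * x (n + 1) - 4 * x n + x (n - 1) ≤ -(b (n + 1) + d (n + 1) - d n)) :
    ∃ c : ℝ, 0 < c ∧ ∀ N : ℕ, 3 ≤ N →
      x N + (1 / 3) * ∑ k ∈ Finset.Icc 3 N, b k + (1 / 3) * d N
        ≤ c * (x 1 + x 2 + d 2) := by
  have hC0 : 0 ≤ 3 * x 2 + d 2 := by nlinarith [hx 2, hd 2]
  have key : ∀ N, 2 ≤ N →
      3 * x N - x (N - 1) + d N + ∑ k ∈ Finset.Icc 3 N, b k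
        ≤ 3 * x 2 - x 1 + d 2 := by
    intro N hN
    induction N with
    | zero => omega
    | succ n ih =>
      rcases Nat.lt_or_ge n 2 with h2 | h2
      · interval_cases n
        · omega
        · simp
      · have ihn := ih h2
        have hrec := h n h2
        have hsum : ∑ k ∈ Finset.Icc 3 (n + 1), b k
            = (∑ k ∈ Finset.Icc 3 n, b k) + b (n + 1) :=
          Finset.sum_Icc_succ_top (by omega) b
        rw [hsum]
        simp only [Nat.add_sub_cancel]
        linarith
  have xbd : ∀ n, 2 ≤ n → x n ≤ x 2 + (3 * x 2 + d 2) / 2 := by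
    intro n hn
    induction n with
    | zero => omega
    | succ m ih =>
      rcases Nat.lt_or_ge m 2 with h2 | h2
      · interval_cases m
        · omega
        · linarith
      · have hk := key (m + 1) (by omega)
        simp only [Nat.add_sub_cancel] at hk
        have hS : 0 ≤ ∑ k ∈ Finset.Icc 3 (m + 1), b k :=
          Finset.sum_nonneg fun i _ => hb i
        have hxm := ih h2
        have := hd (m + 1)
        have := hx 1
        have := hx 2
        linarith
  refine ⟨2, by norm_num, ?_⟩
  intro N hN
  have h1 := key N (by omega)
  have h2 := xbd (N - 1) (by omega)
  have hS : 0 ≤ ∑ k ∈ Finset.Icc 3 N, b k :=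
    Finset.sum_nonneg fun i _ => hb i
  have := hx 1
  have := hx 2
  have := hd 2
  have := hd N
  linarith
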